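/- Let V be a complex inner product space and let L, M : V → V be linear maps that are symmetric with respect to the inner product (⟨Lx, y⟩ = ⟨x, Ly⟩ and ⟨Mx, y⟩ = ⟨x, My⟩ for all x, y ∈ V). Assume: (i) ⟨v, L v⟩ ≥ 0 for all v in a subspace X ⊆ V, with ⟨v, L v⟩ = 0 for v ∈ X only if L v = 0; (ii) ⟨w, M w⟩ ≥ 0 for all w in a subspace X' ⊆ V, with ⟨w, M w⟩ = 0 for w ∈ X' only if M w = 0. If λ ∈ ℂ with Re(λ) > 0 and v ∈ X, w ∈ X' satisfy L v = −λ w and M w = λ v, then v = 0 and w = 0. (Abstract form of Proposition 2: the coupled problem has no eigenvalues with Re(λ) > 0.) -/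
import Mathlib


open scoped InnerProductSpace ComplexOrder

/-- Abstract form of Proposition 2: if the quadratic forms of the symmetric maps `L`
and `M` are nonnegative on subspaces `X` and `X'` respectively and vanish there only on
the respective kernels, then the coupled problem `L v = −λ w`, `M w = λ v` has no
nontrivial solution with `Re(λ) > 0`. -/
theorem coupled_problem_no_unstable_eigenvalues
    {V : Type*} [NormedAddCommGroup V] [InnerProductSpace ℂ V]
    (L M : V →ₗ[ℂ] V)
    (hL : ∀ x y : V, ⟪L x, y⟫_ℂ = ⟪x, L y⟫_ℂ)
    (hM : ∀ x y : V, ⟪M x, y⟫_ℂ = ⟪x, M y⟫_ℂ)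
    (X X' : Submodule ℂ V)
    (hLpos : ∀ v ∈ X, 0 ≤ ⟪v, L v⟫_ℂ)
    (hLzero : ∀ v ∈ X, ⟪v, L v⟫_ℂ = 0 → L v = 0)
    (hMpos : ∀ w ∈ X', 0 ≤ ⟪w, M w⟫_ℂ)
    (hMzero : ∀ w ∈ X', ⟪w, M w⟫_ℂ = 0 → M w = 0)
    (lam : ℂ) (hlam : 0 < lam.re)
    (v w : V) (hvX : v ∈ X) (hwX : w ∈ X')
    (hv : L v = -lam • w) (hw : M w = lam • v) :
    v = 0 ∧ w = 0 := by
  have hlamne : lam ≠ 0 := fun h => by simp [h] at hlam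
  set a : ℂ := ⟪v, w⟫_ℂ with ha
  have hvL : ⟪v, L v⟫_ℂ = -lam * a := by
    rw [hv, inner_smul_right]
  have hwM : ⟪w, M w⟫_ℂ = lam * (starRingEnd ℂ) a := by
    rw [hw, inner_smul_right, ha, inner_conj_symm]
  have h1 : 0 ≤ -lam * a := hvL ▸ hLpos v hvX
  have h2 : 0 ≤ lam * (starRingEnd ℂ) a := hwM ▸ hMpos w hwX
  rw [Complex.le_def] at h1 h2
  simp only [Complex.mul_re, Complex.mul_im, Complex.neg_re, Complex.neg_im,
    Complex.conj_re, Complex.conj_im, Complex.zero_re, Complex.zero_im] at h1 h2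
  have hai : a.im = 0 := by nlinarith [h1.2, h2.2, hlam]
  have h1' : 0 ≤ -(lam.re * a.re) := by have := h1.1; rw [hai] at this; linarith
  have h2' : 0 ≤ lam.re * a.re := by have := h2.1; rw [hai] at this; linarith
  have har : a.re = 0 := by nlinarith [h1', h2', hlam]
  have ha0 : a = 0 := Complex.ext har hai
  have hLv : L v = 0 := hLzero v hvX (by rw [hvL, ha0]; ring)
  have hMw : M w = 0 := hMzero w hwX (by rw [hwM, ha0]; simp)
  have hw0 : w = 0 := by
    have : -lam • w = 0 := hv ▸ hLv
    simpa [neg_eq_zero, hlamne] using (smul_eq_zero.mp this)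
  have hv0 : v = 0 := by
    have : lam • v = 0 := hw ▸ hMw
    simpa [hlamne] using (smul_eq_zero.mp this)
  exact ⟨hv0, hw0⟩
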